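/- For every 0 ≤ p ≤ m, every 0 ≤ r < k^p, and every leaf i ∈ J(p,r): Σ_{u ∈ J(p,r)} C_{iu} = σ²·(1 + (k−1)ρ)^{m−p}. In particular (the case p = 0) every row of C(k,m,ρ,σ) sums to σ²·(1 + (k−1)ρ)^m. -/

import Mathlib

open MeasureTheory ProbabilityTheory
open scoped Classical

/-- `lcaHeight k i j` is the height above the leaves of the lowest common ancestor of
leaves `i` and `j` in the infinite `k`-ary tree: the least `l ≥ 1` with `⌊i/k^l⌋ = ⌊j/k^l⌋`. -/
noncomputable def lcaHeight (k i j : ℕ) : ℕ := sInf {l | 1 ≤ l ∧ i / k ^ l = j / k ^ l}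

/-- The covariance matrix of the regular `(k,m)` conditionally independent Gaussian tree with
leaf standard deviation `σ` and dependency parameter `ρ`. -/
noncomputable def treeCov (k m : ℕ) (ρ σ : ℝ) : Matrix (Fin (k ^ m)) (Fin (k ^ m)) ℝ :=
  Matrix.of fun i j =>
    if (i : ℕ) = (j : ℕ) then σ ^ 2
    else σ ^ 2 * ρ * (1 / (k : ℝ) + (1 - 1 / (k : ℝ)) * ρ) ^ (lcaHeight k i j - 1)

/-- `treeBlock k m p r` is the set `J(p,r)` of leaves of the regular `(k,m)` tree descending
from the `r`-th node at level `p`. -/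
def treeBlock (k m p r : ℕ) : Finset (Fin (k ^ m)) :=
  Finset.univ.filter fun i => (i : ℕ) / k ^ (m - p) = r


lemma div_pow_congr {k i u l n : ℕ} (h : i / k ^ l = u / k ^ l) (hln : l ≤ n) :
    i / k ^ n = u / k ^ n := by
  have hk : k ^ n = k ^ l * k ^ (n - l) := by rw [← pow_add]; congr 1; omega
  rw [hk, ← Nat.div_div_eq_div_mul, ← Nat.div_div_eq_div_mul, h]

lemma lcaHeight_eq {k i u n : ℕ} (h1 : i / k ^ (n + 1) = u / k ^ (n + 1))
    (h2 : i / k ^ n ≠ u / k ^ n) : lcaHeight k i u = n + 1 := by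
  have hmem : n + 1 ∈ {l | 1 ≤ l ∧ i / k ^ l = u / k ^ l} := ⟨by omega, h1⟩
  refine le_antisymm (Nat.sInf_le hmem) (le_csInf ⟨_, hmem⟩ ?_)
  rintro l ⟨hl1, hl2⟩
  by_contra h
  exact h2 (div_pow_congr hl2 (by omega))

lemma card_div_filter (N d r : ℕ) (hd : 0 < d) (h : d * (r + 1) ≤ N) :
    ((Finset.range N).filter (fun u => u / d = r)).card = d := by
  have heq : (Finset.range N).filter (fun u => u / d = r) = Finset.Ico (d * r) (d * r + d) := by
    ext u
    simp only [Finset.mem_filter, Finset.mem_range, Finset.mem_Ico]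
    have hk : d * (r + 1) = d * r + d := by ring
    have hc : r * d = d * r := Nat.mul_comm r d
    constructor
    · rintro ⟨hu, rfl⟩
      have h1 := Nat.div_add_mod u d
      have h2 := Nat.mod_lt u hd
      have h3 : d * (u / d + 1) = d * (u / d) + d := by ring
      omega
    · rintro ⟨h1, h2⟩
      refine ⟨by omega, Nat.div_eq_of_lt_le (by omega) (by rw [add_mul]; omega)⟩
  rw [heq, Nat.card_Ico]; omega

lemma block_sum_nat (k m : ℕ) (hk : 2 ≤ k) (σ ρ : ℝ) (i : ℕ) (hi : i < k ^ m) :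
    ∀ n, n ≤ m →
      ∑ u ∈ (Finset.range (k ^ m)).filter (fun u => u / k ^ n = i / k ^ n),
        (if i = u then σ ^ 2
          else σ ^ 2 * ρ * (1 / (k : ℝ) + (1 - 1 / (k : ℝ)) * ρ) ^ (lcaHeight k i u - 1))
      = σ ^ 2 * (1 + ((k : ℝ) - 1) * ρ) ^ n := by
  have hk0 : 0 < k := by omega
  have hkR : (k : ℝ) ≠ 0 := by positivity
  -- card of a level-n block
  have hcard : ∀ n, n ≤ m →
      ((Finset.range (k ^ m)).filter (fun u => u / k ^ n = i / k ^ n)).card = k ^ n := by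
    intro n hn
    apply card_div_filter _ _ _ (pow_pos hk0 n)
    have hr : i / k ^ n < k ^ (m - n) := by
      rw [Nat.div_lt_iff_lt_mul (pow_pos hk0 n), ← pow_add]
      rwa [Nat.sub_add_cancel hn]
    calc k ^ n * (i / k ^ n + 1) ≤ k ^ n * k ^ (m - n) := by
          exact Nat.mul_le_mul_left _ (by omega)
      _ = k ^ m := by rw [← pow_add]; congr 1; omega
  intro n
  induction n with
  | zero =>
    intro _
    have : (Finset.range (k ^ m)).filter (fun u => u / k ^ 0 = i / k ^ 0) = {i} := by
      ext u
      simp only [Finset.mem_filter, Finset.mem_range, pow_zero, Nat.div_one, Finset.mem_singleton]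
      constructor
      · rintro ⟨_, rfl⟩; rfl
      · rintro rfl; exact ⟨hi, rfl⟩
    rw [this, Finset.sum_singleton, if_pos rfl, pow_zero, mul_one]
  | succ n ih =>
    intro hn1
    have hn : n ≤ m := by omega
    set q : ℝ := 1 / (k : ℝ) + (1 - 1 / (k : ℝ)) * ρ with hq
    set f : ℕ → ℝ := fun u =>
      if i = u then σ ^ 2 else σ ^ 2 * ρ * q ^ (lcaHeight k i u - 1) with hf
    set A := (Finset.range (k ^ m)).filter (fun u => u / k ^ n = i / k ^ n) with hA
    set B := (Finset.range (k ^ m)).filter (fun u => u / k ^ (n + 1) = i / k ^ (n + 1)) with hB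
    have hAB : A ⊆ B := by
      intro u hu
      simp only [hA, hB, Finset.mem_filter] at hu ⊢
      exact ⟨hu.1, (div_pow_congr hu.2.symm (by omega)).symm⟩
    have hsplit : ∑ u ∈ B, f u = ∑ u ∈ B \ A, f u + ∑ u ∈ A, f u :=
      (Finset.sum_sdiff hAB).symm
    have hconst : ∑ u ∈ B \ A, f u = ((k ^ (n + 1) - k ^ n : ℕ) : ℝ) * (σ ^ 2 * ρ * q ^ n) := by
      rw [Finset.sum_congr rfl (fun u hu => ?_), Finset.sum_const, nsmul_eq_mul,
        Finset.card_sdiff_of_subset hAB, hcard n hn, hcard (n + 1) hn1]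
      simp only [Finset.mem_sdiff, hA, hB, Finset.mem_filter, Finset.mem_range] at hu
      obtain ⟨⟨hu1, hu2⟩, hu3⟩ := hu
      have hne : i / k ^ n ≠ u / k ^ n := fun h => hu3 ⟨hu1, h.symm⟩
      have hiu : i ≠ u := fun h => hne (by rw [h])
      rw [hf]
      simp [if_neg hiu, lcaHeight_eq hu2.symm hne]
    have halg : ((k ^ (n + 1) - k ^ n : ℕ) : ℝ) * (σ ^ 2 * ρ * q ^ n)
        + σ ^ 2 * (1 + ((k : ℝ) - 1) * ρ) ^ n
        = σ ^ 2 * (1 + ((k : ℝ) - 1) * ρ) ^ (n + 1) := by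
      have hcast : ((k ^ (n + 1) - k ^ n : ℕ) : ℝ) = (k : ℝ) ^ (n + 1) - (k : ℝ) ^ n := by
        rw [Nat.cast_sub (Nat.pow_le_pow_right hk0 (by omega))]
        push_cast; ring
      have hkq : (k : ℝ) * q = 1 + ((k : ℝ) - 1) * ρ := by
        rw [hq]; field_simp
      have hpow : (k : ℝ) ^ n * q ^ n = (1 + ((k : ℝ) - 1) * ρ) ^ n := by
        rw [← mul_pow, hkq]
      rw [hcast]
      calc ((k : ℝ) ^ (n + 1) - (k : ℝ) ^ n) * (σ ^ 2 * ρ * q ^ n)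
          + σ ^ 2 * (1 + ((k : ℝ) - 1) * ρ) ^ n
          = σ ^ 2 * (((k : ℝ) - 1) * ρ * ((k : ℝ) ^ n * q ^ n)
              + (1 + ((k : ℝ) - 1) * ρ) ^ n) := by ring
        _ = σ ^ 2 * (1 + ((k : ℝ) - 1) * ρ) ^ (n + 1) := by rw [hpow]; ring
    calc ∑ u ∈ B, f u = ∑ u ∈ B \ A, f u + ∑ u ∈ A, f u := hsplit
      _ = _ := by rw [hconst, ih hn, halg]

/-- Row sums of the tree covariance matrix over a subtree block: for any level `p ≤ m`,
any node index `r < k^p`, and any leaf `i` in the block `J(p,r)`,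
`∑_{u ∈ J(p,r)} C_{iu} = σ²·(1 + (k-1)ρ)^(m-p)`. In particular (case `p = 0`) every row of
`C(k,m,ρ,σ)` sums to `σ²·(1 + (k-1)ρ)^m`. -/
theorem treeCov_row_block_sum (k m : ℕ) (hk : 2 ≤ k) (hm : 1 ≤ m) (σ ρ : ℝ) (hσ : 0 < σ)
    (hρ_lb : -(1 / ((k : ℝ) - 1)) < ρ) (hρ_ub : ρ < 1)
    (p r : ℕ) (hp : p ≤ m) (hr : r < k ^ p) (i : Fin (k ^ m)) (hi : i ∈ treeBlock k m p r) :
    ∑ u ∈ treeBlock k m p r, treeCov k m ρ σ i u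
      = σ ^ 2 * (1 + ((k : ℝ) - 1) * ρ) ^ (m - p) := by
  classical
  have hk0 : 0 < k := by omega
  set n := m - p with hn
  have hnm : n ≤ m := by omega
  have hiblock : (i : ℕ) / k ^ n = r := by
    simpa [treeBlock] using hi
  have hblock : treeBlock k m p r
      = Finset.univ.filter (fun u : Fin (k ^ m) => (u : ℕ) / k ^ n = (i : ℕ) / k ^ n) := by
    rw [treeBlock, hiblock]
  set q : ℝ := 1 / (k : ℝ) + (1 - 1 / (k : ℝ)) * ρ with hq
  set f : ℕ → ℝ := fun u =>
    if (i : ℕ) = u then σ ^ 2 else σ ^ 2 * ρ * q ^ (lcaHeight k i u - 1) with hf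
  have hsum : ∑ u ∈ treeBlock k m p r, treeCov k m ρ σ i u
      = ∑ v ∈ (Finset.range (k ^ m)).filter (fun v => v / k ^ n = (i : ℕ) / k ^ n), f v := by
    rw [hblock, Finset.sum_filter, Finset.sum_filter]
    rw [← Fin.sum_univ_eq_sum_range
      (fun v => if v / k ^ n = (i : ℕ) / k ^ n then f v else 0) (k ^ m)]
    rfl
  rw [hsum, block_sum_nat k m hk σ ρ (i : ℕ) i.isLt n hnm]
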